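/- Plücker-type identity for Hankel columns: let c'_j = (s_j, …, s_{j+n-1})ᵀ ∈ K^n and c_j = (s_j, …, s_{j+n-2})ᵀ ∈ K^{n-1}. Define Δ_n = |c'_0 ⋯ c'_{n-1}|, Δ*_n = |c'_0 ⋯ c'_{n-2} c'_n|, Δ**_n = |c'_0 ⋯ c'_{n-3} c'_{n-1} c'_n|, Δ_{n-1} = |c_0 ⋯ c_{n-2}|, Δ*_{n-1} = |c_0 ⋯ c_{n-3} c_{n-1}|, Δ''_{n-1} = |c_0 ⋯ c_{n-3} c_n|. Then Δ**_n Δ_{n-1} − Δ*_n Δ*_{n-1} + Δ_n Δ''_{n-1} = 0. -/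
import Mathlib

open Matrix in
lemma hankel_keyG {K : Type*} [CommRing K] {n : ℕ} (X : Matrix (Fin n) (Fin n) K)
    (k : Fin n) (v : Fin (n + 1) → Fin n → K) :
    ∑ j : Fin (n + 1), (-1 : K) ^ (n + (j : ℕ)) * (X.updateCol k (v j)).det *
      (Matrix.of fun i l : Fin n => v (j.succAbove l) i).det = 0 := by
  classical
  set N : Matrix (Fin (n + 1)) (Fin (n + 1)) K :=
    Matrix.of fun i j => Fin.lastCases ((X.updateCol k (v j)).det) (fun i' => v j i') i
    with hN
  have hlast : ∀ j, N (Fin.last n) j = (X.updateCol k (v j)).det := by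
    intro j; simp [hN]
  have hcast : ∀ (i' : Fin n) j, N (Fin.castSucc i') j = v j i' := by
    intro i' j; simp [hN]
  set c : Fin (n + 1) → K := fun i =>
    Fin.lastCases 0 (fun i' => (X.updateCol k (fun l => if i' = l then 1 else 0)).det) i
    with hc
  have hrow : N (Fin.last n) = ∑ i : Fin (n + 1), c i • N i := by
    funext j
    rw [hlast]
    have h1 : (X.updateCol k (v j)).det
        = ∑ i' : Fin n, v j i' * (X.updateCol k (fun l => if i' = l then 1 else 0)).det := by
      rw [← Matrix.cramer_apply]
      conv_lhs => rw [pi_eq_sum_univ (v j)]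
      rw [map_sum, Finset.sum_apply]
      simp [Matrix.cramer_apply, Matrix.det_updateCol_smul]
    rw [h1, Finset.sum_apply, Fin.sum_univ_castSucc]
    simp [hc, hcast, mul_comm]
  have hdet : N.det = 0 := by
    calc N.det = (N.updateRow (Fin.last n) (∑ i, c i • N i)).det := by
          rw [← hrow, Matrix.updateRow_eq_self]
      _ = c (Fin.last n) • N.det := Matrix.det_updateRow_sum N _ c
      _ = 0 := by simp [hc]
  have hexp := Matrix.det_succ_row N (Fin.last n)
  rw [hdet] at hexp
  rw [hexp]
  refine Finset.sum_congr rfl fun j _ => ?_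
  have hsub : N.submatrix (Fin.last n).succAbove j.succAbove
      = Matrix.of fun i l : Fin n => v (j.succAbove l) i := by
    ext i l
    simp [Fin.succAbove_last, hcast]
  rw [hsub, hlast, Fin.val_last]

lemma hankel_coe_succAbove {n : ℕ} (j : Fin (n + 1)) (l : Fin n) :
    ((j.succAbove l : Fin (n + 1)) : ℕ) = if (l : ℕ) < (j : ℕ) then (l : ℕ) else (l : ℕ) + 1 := by
  rcases lt_or_ge ((l : ℕ)) (j : ℕ) with h | h
  · rw [Fin.succAbove_of_castSucc_lt _ _ (by simpa [Fin.lt_def] using h)]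
    simp [h]
  · rw [Fin.succAbove_of_le_castSucc _ _ (by simpa [Fin.le_def] using h)]
    simp [Nat.not_lt.mpr h]

lemma hankel_det_aux {K : Type*} [CommRing K] (s : ℕ → K) (m t : ℕ) :
    ((Matrix.of fun i l : Fin (m + 2) =>
        if (l : ℕ) < m then s ((i : ℕ) + l) else if (l : ℕ) = m then (0 : K)
        else if (i : ℕ) = m + 1 then 1 else 0).updateCol ⟨m, by omega⟩
          (fun i => s ((i : ℕ) + t))).det
      = (Matrix.of fun i l : Fin (m + 1) =>
          if (l : ℕ) < m then s ((i : ℕ) + l) else s ((i : ℕ) + t)).det := by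
  have hM : ((Matrix.of fun i l : Fin (m + 2) =>
        if (l : ℕ) < m then s ((i : ℕ) + l) else if (l : ℕ) = m then (0 : K)
        else if (i : ℕ) = m + 1 then 1 else 0).updateCol ⟨m, by omega⟩
          (fun i => s ((i : ℕ) + t)))
      = Matrix.of fun i l : Fin (m + 2) =>
        if (l : ℕ) < m then s ((i : ℕ) + l) else if (l : ℕ) = m then s ((i : ℕ) + t)
        else if (i : ℕ) = m + 1 then 1 else 0 := by
    ext i l
    by_cases hl : l = (⟨m, by omega⟩ : Fin (m + 2))
    · subst hl; simp [Matrix.updateCol_apply]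
    · have h2 : (l : ℕ) ≠ m := fun h => hl (Fin.ext h)
      simp [Matrix.updateCol_apply, hl, h2]
  rw [hM, Matrix.det_succ_column _ (Fin.last (m + 1)),
    Finset.sum_eq_single (Fin.last (m + 1))]
  · have hsub : (Matrix.of fun i l : Fin (m + 2) =>
        if (l : ℕ) < m then s ((i : ℕ) + l) else if (l : ℕ) = m then s ((i : ℕ) + t)
        else if (i : ℕ) = m + 1 then 1 else 0).submatrix
          (Fin.last (m + 1)).succAbove (Fin.last (m + 1)).succAbove
        = Matrix.of fun i l : Fin (m + 1) =>
          if (l : ℕ) < m then s ((i : ℕ) + l) else s ((i : ℕ) + t) := by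
      ext i l
      have hl := l.isLt
      simp only [Fin.succAbove_last, Matrix.submatrix_apply, Matrix.of_apply,
        Fin.coe_castSucc]
      by_cases h : (l : ℕ) < m
      · simp [h]
      · have : (l : ℕ) = m := by omega
        simp [h, this]
    rw [hsub]
    have hone : (Matrix.of fun i l : Fin (m + 2) =>
        if (l : ℕ) < m then s ((i : ℕ) + l) else if (l : ℕ) = m then s ((i : ℕ) + t)
        else if (i : ℕ) = m + 1 then 1 else 0) (Fin.last (m + 1)) (Fin.last (m + 1)) = 1 := by
      simp
    rw [hone, Fin.val_last]
    have : (-1 : K) ^ ((m + 1) + (m + 1)) = 1 := Even.neg_one_pow ⟨m + 1, by ring⟩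
    rw [this, one_mul, one_mul]
  · intro i _ hi
    have h1 : (i : ℕ) ≠ m + 1 := by
      intro h; exact hi (Fin.ext (by simp [h]))
    have h0 : (Matrix.of fun i l : Fin (m + 2) =>
        if (l : ℕ) < m then s ((i : ℕ) + l) else if (l : ℕ) = m then s ((i : ℕ) + t)
        else if (i : ℕ) = m + 1 then 1 else 0) i (Fin.last (m + 1)) = 0 := by
      simp [h1]
    rw [h0]; ring
  · intro h; exact absurd (Finset.mem_univ _) h


/-- Plücker-type identity for Hankel columns (appendix of the paper), for `n = m + 2`:
`Δ**ₙ Δ_{n-1} − Δ*ₙ Δ*_{n-1} + Δₙ Δ''_{n-1} = 0`, where determinants of size `n` use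
columns `c'ⱼ = (s_j, …, s_{j+n-1})ᵀ` and those of size `n−1` use `cⱼ = (s_j, …, s_{j+n-2})ᵀ`:
`Δₙ = |c'₀ ⋯ c'_{n-1}|`, `Δ*ₙ = |c'₀ ⋯ c'_{n-2} c'ₙ|`, `Δ**ₙ = |c'₀ ⋯ c'_{n-3} c'_{n-1} c'ₙ|`,
`Δ_{n-1} = |c₀ ⋯ c_{n-2}|`, `Δ*_{n-1} = |c₀ ⋯ c_{n-3} c_{n-1}|`, `Δ''_{n-1} = |c₀ ⋯ c_{n-3} cₙ|`. -/
theorem hankel_plucker {K : Type*} [CommRing K] (s : ℕ → K) (m : ℕ) :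
    (Matrix.of fun i j : Fin (m + 2) =>
        s ((i : ℕ) + (if (j : ℕ) < m then (j : ℕ) else (j : ℕ) + 1))).det *
      (Matrix.of fun i j : Fin (m + 1) => s ((i : ℕ) + (j : ℕ))).det
    - (Matrix.of fun i j : Fin (m + 2) =>
        s ((i : ℕ) + (if (j : ℕ) < m + 1 then (j : ℕ) else (j : ℕ) + 1))).det *
      (Matrix.of fun i j : Fin (m + 1) =>
        s ((i : ℕ) + (if (j : ℕ) < m then (j : ℕ) else (j : ℕ) + 1))).det
    + (Matrix.of fun i j : Fin (m + 2) => s ((i : ℕ) + (j : ℕ))).det *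
      (Matrix.of fun i j : Fin (m + 1) =>
        s ((i : ℕ) + (if (j : ℕ) < m then (j : ℕ) else (j : ℕ) + 2))).det = 0 := by
  classical
  set X : Matrix (Fin (m + 2)) (Fin (m + 2)) K := Matrix.of fun i l =>
    if (l : ℕ) < m then s ((i : ℕ) + l) else if (l : ℕ) = m then (0 : K)
    else if (i : ℕ) = m + 1 then 1 else 0 with hX
  set k : Fin (m + 2) := ⟨m, by omega⟩ with hk
  set v : Fin (m + 3) → Fin (m + 2) → K := fun j i => s ((i : ℕ) + (j : ℕ)) with hv
  have key := hankel_keyG X k v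
  simp only [Fin.sum_univ_castSucc] at key
  -- coercion values of the three distinguished indices
  have c1 : (((Fin.last m).castSucc.castSucc : Fin (m + 3)) : ℕ) = m := by simp
  have c2 : (((Fin.last (m + 1)).castSucc : Fin (m + 3)) : ℕ) = m + 1 := by simp
  have c3 : ((Fin.last (m + 2) : Fin (m + 3)) : ℕ) = m + 2 := rfl
  -- the residual sum vanishes (duplicate columns)
  have hS : ∑ j : Fin m,
      (-1 : K) ^ (m + 2 + ((j.castSucc.castSucc.castSucc : Fin (m + 3)) : ℕ)) *
        (X.updateCol k (v j.castSucc.castSucc.castSucc)).det *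
        (Matrix.of fun i l : Fin (m + 2) =>
          v (j.castSucc.castSucc.castSucc.succAbove l) i).det = 0 := by
    refine Finset.sum_eq_zero fun j _ => ?_
    have hz : (X.updateCol k (v j.castSucc.castSucc.castSucc)).det = 0 := by
      have hjm := j.isLt
      have hne : (⟨(j : ℕ), by omega⟩ : Fin (m + 2)) ≠ k := by
        intro h
        have h2 := congrArg Fin.val h
        rw [hk] at h2
        simp at h2
        omega
      refine Matrix.det_zero_of_column_eq hne fun r => ?_
      rw [Matrix.updateCol_apply, Matrix.updateCol_apply, if_neg hne, if_pos rfl]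
      simp [hX, hv, hjm]
    rw [hz]; ring
  -- signs
  have s1 : (-1 : K) ^ (m + 2 + m) = 1 := Even.neg_one_pow ⟨m + 1, by ring⟩
  have s2 : (-1 : K) ^ (m + 2 + (m + 1)) = -1 := Odd.neg_one_pow ⟨m + 1, by ring⟩
  have s3 : (-1 : K) ^ (m + 2 + (m + 2)) = 1 := Even.neg_one_pow ⟨m + 2, by ring⟩
  -- the three small determinants
  have hA1 : (X.updateCol k (v (Fin.last m).castSucc.castSucc)).det
      = (Matrix.of fun i j : Fin (m + 1) => s ((i : ℕ) + (j : ℕ))).det := by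
    have hvv : v (Fin.last m).castSucc.castSucc = fun i : Fin (m + 2) => s ((i : ℕ) + m) := by
      funext i; rw [hv]; simp
    rw [hvv, hX, hk, hankel_det_aux s m m]
    congr 1
    ext i l
    have hl := l.isLt
    by_cases h : (l : ℕ) < m
    · simp [h]
    · have hm : (l : ℕ) = m := by omega
      simp [h, hm]
  have hA2 : (X.updateCol k (v (Fin.last (m + 1)).castSucc)).det
      = (Matrix.of fun i j : Fin (m + 1) =>
          s ((i : ℕ) + (if (j : ℕ) < m then (j : ℕ) else (j : ℕ) + 1))).det := by
    have hvv : v (Fin.last (m + 1)).castSucc = fun i : Fin (m + 2) => s ((i : ℕ) + (m + 1)) := by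
      funext i; rw [hv]; simp
    rw [hvv, hX, hk, hankel_det_aux s m (m + 1)]
    congr 1
    ext i l
    have hl := l.isLt
    by_cases h : (l : ℕ) < m
    · simp [h]
    · have hm : (l : ℕ) = m := by omega
      simp only [Matrix.of_apply, if_neg h]
      congr 1
      omega
  have hA3 : (X.updateCol k (v (Fin.last (m + 2)))).det
      = (Matrix.of fun i j : Fin (m + 1) =>
          s ((i : ℕ) + (if (j : ℕ) < m then (j : ℕ) else (j : ℕ) + 2))).det := by
    have hvv : v (Fin.last (m + 2)) = fun i : Fin (m + 2) => s ((i : ℕ) + (m + 2)) := by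
      funext i; rw [hv]; simp
    rw [hvv, hX, hk, hankel_det_aux s m (m + 2)]
    congr 1
    ext i l
    have hl := l.isLt
    by_cases h : (l : ℕ) < m
    · simp [h]
    · have hm : (l : ℕ) = m := by omega
      simp only [Matrix.of_apply, if_neg h]
      congr 1
      omega
  -- the three large determinants
  have hB1 : (Matrix.of fun i l : Fin (m + 2) =>
        v ((Fin.last m).castSucc.castSucc.succAbove l) i)
      = Matrix.of fun i j : Fin (m + 2) =>
          s ((i : ℕ) + (if (j : ℕ) < m then (j : ℕ) else (j : ℕ) + 1)) := by
    ext i l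
    simp only [Matrix.of_apply, hv]
    rw [hankel_coe_succAbove, c1]
  have hB2 : (Matrix.of fun i l : Fin (m + 2) =>
        v ((Fin.last (m + 1)).castSucc.succAbove l) i)
      = Matrix.of fun i j : Fin (m + 2) =>
          s ((i : ℕ) + (if (j : ℕ) < m + 1 then (j : ℕ) else (j : ℕ) + 1)) := by
    ext i l
    simp only [Matrix.of_apply, hv]
    rw [hankel_coe_succAbove, c2]
  have hB3 : (Matrix.of fun i l : Fin (m + 2) =>
        v ((Fin.last (m + 2)).succAbove l) i)
      = Matrix.of fun i j : Fin (m + 2) => s ((i : ℕ) + (j : ℕ)) := by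
    ext i l
    simp only [Matrix.of_apply, hv]
    rw [hankel_coe_succAbove, c3, if_pos l.isLt]
  rw [hS, zero_add, c1, c2, c3, s1, s2, s3, hA1, hA2, hA3, hB1, hB2, hB3] at key
  linear_combination key
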